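/- Let n ≥ 2 and c ≥ 1 be integers with n + 1 ≥ 2c + 1, and let a_0 ≤ a_1 ≤ … ≤ a_n and d_1 ≤ d_2 ≤ … ≤ d_c be positive integers satisfying: d_c ≥ 2a_n; d_{c−k} > a_{n−k} for all 1 ≤ k ≤ c−1; a_0⋯a_n ≤ d_1⋯d_c; and a_0 + a_1 + … + a_n > d_1 + … + d_c. Then a_i ≤ n for every 0 ≤ i ≤ n, and d_j ≤ n(n+1) for every 1 ≤ j ≤ c. -/

import Mathlib

/-- slack lemma: for `t ≤ b`, `(b+e) * t^e ≤ b * (t+1)^e`. -/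
lemma aux_slack (t b : ℕ) (hb : t ≤ b) : ∀ e : ℕ, (b + e) * t ^ e ≤ b * (t + 1) ^ e := by
  intro e
  induction e with
  | zero => simp
  | succ e ih =>
    have h1 : (b + (e+1)) * t ≤ (b + e) * (t + 1) := by nlinarith
    calc (b + (e+1)) * t ^ (e+1) = ((b + (e+1)) * t) * t ^ e := by ring
      _ ≤ ((b + e) * (t+1)) * t ^ e := Nat.mul_le_mul_right _ h1
      _ = (t+1) * ((b + e) * t ^ e) := by ring
      _ ≤ (t+1) * (b * (t+1) ^ e) := Nat.mul_le_mul_left _ ih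
      _ = b * (t+1) ^ (e+1) := by ring

/-- `(t+1)^e ≤ (e+1) * t^e` whenever `e + 1 ≤ t`. -/
lemma aux_A : ∀ e t : ℕ, e + 1 ≤ t → (t + 1) ^ e ≤ (e + 1) * t ^ e := by
  intro e
  induction e with
  | zero => intro t _; simp
  | succ e ih =>
    intro t ht
    have h1 : (t+1)^e ≤ (e+1) * t^e := ih t (by omega)
    calc (t+1)^(e+1) = (t+1)^e * (t+1) := by ring
      _ ≤ ((e+1) * t^e) * (t+1) := Nat.mul_le_mul_right _ h1
      _ = (e+1) * (t+1) * t^e := by ring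
      _ ≤ ((e+2) * t) * t^e := by
          have : (e+1) * (t+1) ≤ (e+2) * t := by nlinarith
          exact Nat.mul_le_mul_right _ this
      _ = (e+1+1) * t^(e+1) := by ring

/-- `t^(u-1) ≤ u^(t-1)` for `1 ≤ u ≤ t`. -/
lemma aux_B (u : ℕ) (hu : 1 ≤ u) : ∀ t : ℕ, u ≤ t → t ^ (u - 1) ≤ u ^ (t - 1) := by
  intro t ht
  induction t, ht using Nat.le_induction with
  | base => exact le_refl _
  | succ t ht ih =>
    have hA : (t+1)^(u-1) ≤ u * t^(u-1) := by
      have h := aux_A (u-1) t (by omega)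
      have h2 : u - 1 + 1 = u := by omega
      rwa [h2] at h
    calc (t+1)^(u-1) ≤ u * t^(u-1) := hA
      _ ≤ u * u^(t-1) := Nat.mul_le_mul_left _ ih
      _ = u^(t-1+1) := by rw [pow_succ]; ring
      _ = u^(t+1-1) := by congr 1; omega


lemma aux_exp3 (t : ℕ) (ht : 1 ≤ t) : (t + 1) ^ t ≤ 3 * t ^ t := by
  have ht0 : (0:ℝ) < (t:ℝ) := by exact_mod_cast ht
  have h1 : ((t:ℝ) + 1) ≤ (t:ℝ) * Real.exp (1 / t) := by
    have := Real.add_one_le_exp (1 / (t:ℝ))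
    have h2 : (t:ℝ) * (1/t + 1) ≤ (t:ℝ) * Real.exp (1/t) :=
      mul_le_mul_of_nonneg_left this (le_of_lt ht0)
    calc ((t:ℝ) + 1) = (t:ℝ) * (1/t + 1) := by field_simp; ring
      _ ≤ _ := h2
  have h3 : ((t:ℝ) + 1) ^ t ≤ ((t:ℝ) * Real.exp (1/t)) ^ t := by
    apply pow_le_pow_left₀ (by positivity) h1
  have h4 : ((t:ℝ) * Real.exp (1/t)) ^ t = (t:ℝ)^t * Real.exp 1 := by
    rw [mul_pow, ← Real.exp_nat_mul]
    congr 2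
    field_simp
  have h5 : Real.exp 1 ≤ 3 := by
    have := Real.exp_one_lt_d9
    linarith
  have h6 : ((t:ℝ) + 1) ^ t ≤ 3 * (t:ℝ)^t := by
    rw [h4] at h3
    nlinarith [pow_pos ht0 t]
  exact_mod_cast (by push_cast; exact h6 : (((t:ℕ) + 1 : ℕ) : ℝ) ^ t ≤ ((3 * t ^ t : ℕ) : ℝ))

/-- `(t+1)^(2t-2) ≤ t^(2t-1)` for `t ≥ 4`, in subtraction-free form with `t = s+4`. -/
lemma aux_L1 (s : ℕ) : (s + 5) ^ (2*s + 6) ≤ (s + 4) ^ (2*s + 7) := by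
  rcases Nat.lt_or_ge s 5 with hs | hs
  · interval_cases s <;> norm_num
  · -- t = s + 4 ≥ 9
    set t : ℕ := s + 4 with hT
    have h3 : (t + 1) ^ t ≤ 3 * t ^ t := aux_exp3 t (by omega)
    have h9 : (t + 1) ^ (2*t) ≤ 9 * t ^ (2*t) := by
      have := Nat.mul_le_mul h3 h3
      calc (t+1)^(2*t) = (t+1)^t * (t+1)^t := by rw [← pow_add]; congr 1 <;> omega
        _ ≤ (3 * t^t) * (3 * t^t) := this
        _ = 9 * (t^t * t^t) := by ring
        _ = 9 * t^(2*t) := by rw [← pow_add]; congr 2; omega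
    have key : (t + 1)^(2*s+6) * (t+1)^2 ≤ (9 * t^(2*s+6)) * (t+1)^2 := by
      calc (t + 1)^(2*s+6) * (t+1)^2 = (t+1)^(2*t) := by rw [← pow_add]; congr 1 <;> omega
        _ ≤ 9 * t^(2*t) := h9
        _ = (9 * t^(2*s+6)) * t^2 := by rw [mul_assoc, ← pow_add]; congr 2 <;> omega
        _ ≤ (9 * t^(2*s+6)) * (t+1)^2 := by
            apply Nat.mul_le_mul_left
            apply Nat.pow_le_pow_left; omega
    have h10 : (t + 1)^(2*s+6) ≤ 9 * t^(2*s+6) :=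
      Nat.le_of_mul_le_mul_right key (by positivity)
    calc (t+1)^(2*s+6) ≤ 9 * t^(2*s+6) := h10
      _ ≤ t * t^(2*s+6) := Nat.mul_le_mul_right _ (by omega)
      _ = t^(2*s+7) := by rw [← pow_succ']


lemma core (t' E w P : ℕ) (hE1 : t' + 1 ≤ E) (hEw : w + 2 ≤ E)
    (hPl : (t'+2)^E ≤ P^(t'+1)) (hPu : P * (t'+2)^w ≤ 2 * (t'+3)^w) : False := by
  have hIII : (t'+2)^(E + w*(t'+1)) ≤ 2^(t'+1) * (t'+3)^(w*(t'+1)) := by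
    calc (t'+2)^(E + w*(t'+1)) = (t'+2)^E * ((t'+2)^w)^(t'+1) := by
          rw [pow_add, ← pow_mul]
      _ ≤ P^(t'+1) * ((t'+2)^w)^(t'+1) := Nat.mul_le_mul_right _ hPl
      _ = (P * (t'+2)^w)^(t'+1) := (mul_pow _ _ _).symm
      _ ≤ (2 * (t'+3)^w)^(t'+1) := Nat.pow_le_pow_left hPu _
      _ = 2^(t'+1) * (t'+3)^(w*(t'+1)) := by rw [mul_pow, ← pow_mul]
  match t' with
  | 0 =>
    norm_num at hIII
    -- hIII : 2^(E+w) ≤ 2^1 * 3^w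
    have h4 : (2:ℕ)^(2*w+2) ≤ 2^(E+w) := Nat.pow_le_pow_right (by norm_num) (by omega)
    have h5 : (2:ℕ)^(2*w+2) = 4 * 4^w := by
      rw [pow_add, pow_mul]; norm_num; ring
    have h6 : (3:ℕ)^w ≤ 4^w := Nat.pow_le_pow_left (by norm_num) w
    have h7 : (0:ℕ) < 4^w := by positivity
    omega
  | 1 =>
    -- hIII : 3^(E+2w) ≤ 2^2 * 4^(2w)
    have h4 : (3:ℕ)^(3*w+2) ≤ 3^(E+w*2) := Nat.pow_le_pow_right (by norm_num) (by omega)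
    have h5 : (3:ℕ)^(3*w+2) = 9 * 27^w := by
      rw [pow_add, pow_mul]; norm_num; ring
    have h6 : (4:ℕ)^(w*2) = 16^w := by rw [mul_comm, pow_mul]; norm_num
    have h7 : (16:ℕ)^w ≤ 27^w := Nat.pow_le_pow_left (by norm_num) w
    have h8 : (0:ℕ) < 27^w := by positivity
    have h9 : (9:ℕ) * 27^w ≤ 4 * 16^w := by
      calc (9:ℕ) * 27^w = 3^(3*w+2) := h5.symm
        _ ≤ 3^(E+w*2) := h4
        _ ≤ 2^2 * 4^(w*2) := by exact_mod_cast hIII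
        _ = 4 * 16^w := by rw [h6]; norm_num
    have h10 : (4:ℕ) * 16^w ≤ 4 * 27^w := Nat.mul_le_mul_left _ h7
    omega
  | (s+2) =>
    set T : ℕ := s + 4 with hT
    -- hIII : T^(E + w*(s+3)) ≤ 2^(s+3) * (T+1)^(w*(s+3))
    have hsq : (T^(E + w*(s+3)))^2 ≤ (2^(s+3) * (T+1)^(w*(s+3)))^2 :=
      Nat.pow_le_pow_left hIII 2
    have hL : T^((E + w*(s+3))*2) ≤ T^((s+3) + (2*s+7)*w) := by
      calc T^((E + w*(s+3))*2) = (T^(E + w*(s+3)))^2 := by rw [← pow_mul]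
        _ ≤ (2^(s+3) * (T+1)^(w*(s+3)))^2 := hsq
        _ = 4^(s+3) * ((T+1)^(2*s+6))^w := by
            rw [mul_pow]
            congr 1
            · rw [← pow_mul, mul_comm (s+3) 2, pow_mul]; norm_num
            · rw [← pow_mul, ← pow_mul]; congr 1; ring
        _ ≤ T^(s+3) * (T^(2*s+7))^w := by
            apply Nat.mul_le_mul
            · exact Nat.pow_le_pow_left (by omega) _
            · exact Nat.pow_le_pow_left (aux_L1 s) _
        _ = T^((s+3) + (2*s+7)*w) := by rw [← pow_mul, ← pow_add]
    have hle : (E + w*(s+3))*2 ≤ (s+3) + (2*s+7)*w :=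
      (Nat.pow_le_pow_iff_right (by omega)).mp hL
    have hexp : (2*s+7)*w = 2*(w*(s+3)) + w := by ring
    have hexp2 : (E + w*(s+3))*2 = 2*E + 2*(w*(s+3)) := by ring
    linarith



open Finset

/-- numerical content of the Fano case of the main theorem.
Weights are encoded as `a : ℕ → ℕ` with relevant values `a 0, …, a n`, and
degrees as `d : ℕ → ℕ` with relevant values `d 1, …, d c`.  Let `n ≥ 2`,
`c ≥ 1`, `n + 1 ≥ 2c + 1`, with `a_0 ≤ … ≤ a_n` and `d_1 ≤ … ≤ d_c`
positive integers such that `d_c ≥ 2a_n`, `d_{c-k} > a_{n-k}` for all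
`1 ≤ k ≤ c-1`, `a_0⋯a_n ≤ d_1⋯d_c`, and `a_0 + … + a_n > d_1 + … + d_c`.
Then `a_i ≤ n` for every `0 ≤ i ≤ n` and `d_j ≤ n(n+1)` for every
`1 ≤ j ≤ c`. -/
theorem stmt_10 (n c : ℕ) (hn : 2 ≤ n) (hc : 1 ≤ c) (hnc : 2 * c + 1 ≤ n + 1)
    (a d : ℕ → ℕ)
    (ha_pos : ∀ i : ℕ, i ≤ n → 0 < a i)
    (hd_pos : ∀ j : ℕ, 1 ≤ j → j ≤ c → 0 < d j)
    (ha_mono : ∀ i j : ℕ, i ≤ j → j ≤ n → a i ≤ a j)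
    (hd_mono : ∀ i j : ℕ, 1 ≤ i → i ≤ j → j ≤ c → d i ≤ d j)
    (hdc : 2 * a n ≤ d c)
    (hk : ∀ k : ℕ, 1 ≤ k → k ≤ c - 1 → a (n - k) < d (c - k))
    (hprod : ∏ i ∈ Finset.range (n + 1), a i ≤ ∏ j ∈ Finset.Icc 1 c, d j)
    (hsum : ∑ j ∈ Finset.Icc 1 c, d j < ∑ i ∈ Finset.range (n + 1), a i) :
    (∀ i : ℕ, i ≤ n → a i ≤ n) ∧
      (∀ j : ℕ, 1 ≤ j → j ≤ c → d j ≤ n * (n + 1)) := by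
  have key : a n ≤ n := by
    by_contra hnot
    push_neg at hnot
    obtain ⟨c', rfl⟩ : ∃ c', c = c' + 1 := ⟨c - 1, by omega⟩
    obtain ⟨m, rfl⟩ : ∃ m, n = m + c' + 1 := ⟨n - c' - 1, by omega⟩
    have hcm : c' + 1 ≤ m := by omega
    set N := a (m + c' + 1) with hN
    set t := a m with ht
    set U := ∑ i ∈ range (m+1), a i with hU
    set P := ∏ i ∈ range (m+1), a i with hP
    set V := ∑ j ∈ range c', a (m+1+j) with hV
    set Q := ∏ j ∈ range c', a (m+1+j) with hQ
    -- Sum decomposition of the weights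
    have hA_sum : ∑ i ∈ range (m + c' + 1 + 1), a i = U + V + N := by
      have e1 : m + c' + 1 + 1 = (m+1) + (c'+1) := by omega
      have h2 : ∑ x ∈ range (c'+1), a (m+1+x) = V + N := by
        rw [Finset.sum_range_succ]
        congr 1
        rw [show m+1+c' = m+c'+1 from by omega]
      rw [e1, Finset.sum_range_add, h2, ← add_assoc]
    -- Product decomposition of the weights
    have hA_prod : ∏ i ∈ range (m + c' + 1 + 1), a i = P * Q * N := by
      have e1 : m + c' + 1 + 1 = (m+1) + (c'+1) := by omega
      have h2 : ∏ x ∈ range (c'+1), a (m+1+x) = Q * N := by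
        rw [Finset.prod_range_succ]
        congr 1
        rw [show m+1+c' = m+c'+1 from by omega]
      rw [e1, Finset.prod_range_add, h2, ← mul_assoc]
    -- Degree sums and products
    have hIcc : Finset.Icc 1 (c'+1) = Finset.Ico 1 (c'+2) := by
      exact (Finset.Ico_add_one_right_eq_Icc 1 (c'+1)).symm
    have hD_sum : ∑ j ∈ Finset.Icc 1 (c'+1), d j
        = (∑ j ∈ range c', d (1+j)) + d (c'+1) := by
      rw [hIcc, Finset.sum_Ico_eq_sum_range]
      have e1 : c' + 2 - 1 = c' + 1 := by omega
      rw [e1, Finset.sum_range_succ, show 1+c' = c'+1 from by omega]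
    have hD_prod : ∏ j ∈ Finset.Icc 1 (c'+1), d j
        = (∏ j ∈ range c', d (1+j)) * d (c'+1) := by
      rw [hIcc, Finset.prod_Ico_eq_prod_range]
      have e1 : c' + 2 - 1 = c' + 1 := by omega
      rw [e1, Finset.prod_range_succ, show 1+c' = c'+1 from by omega]
    -- pairing inequalities
    have hpair : ∀ j ∈ range c', a (m+1+j) + 1 ≤ d (1+j) := by
      intro j hj
      have hj' : j < c' := Finset.mem_range.mp hj
      have h := hk (c' - j) (by omega) (by omega)
      have e1 : m + c' + 1 - (c' - j) = m + 1 + j := by omega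
      have e2 : c' + 1 - (c' - j) = 1 + j := by omega
      rw [e1, e2] at h
      omega
    have hdcN : 2 * N ≤ d (c'+1) := hdc
    -- slack variables
    set e : ℕ → ℕ := fun j => d (1+j) - (a (m+1+j) + 1) with he
    set f : ℕ := d (c'+1) - 2*N with hf
    set s : ℕ := (∑ j ∈ range c', e j) + f with hs
    have hd_eq : ∀ j ∈ range c', d (1+j) = (a (m+1+j) + 1) + e j := by
      intro j hj
      have := hpair j hj
      simp only [he]
      omega
    have hD_eq : ∑ j ∈ Finset.Icc 1 (c'+1), d j = V + c' + 2*N + s := by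
      rw [hD_sum]
      have e1 : ∑ j ∈ range c', d (1+j) = ∑ j ∈ range c', ((a (m+1+j) + 1) + e j) :=
        Finset.sum_congr rfl hd_eq
      rw [e1, Finset.sum_add_distrib, Finset.sum_add_distrib, Finset.sum_const,
        Finset.card_range]
      simp only [smul_eq_mul, mul_one]
      have e2 : d (c'+1) = 2*N + f := by simp only [hf]; omega
      rw [e2]
      simp only [hV, hs]
      ring
    -- the key sum inequality
    have hstar : N + c' + s + 1 ≤ U := by
      rw [hA_sum] at hsum
      rw [hD_eq] at hsum
      omega
    -- U ≥ m + 1 and the excess E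
    have hapos : ∀ i ∈ range (m+1), 1 ≤ a i := by
      intro i hi
      exact ha_pos i (by simp at hi; omega)
    have hUm : m + 1 ≤ U := by
      calc m + 1 = ∑ _i ∈ range (m+1), 1 := by simp
        _ ≤ U := Finset.sum_le_sum hapos
    set E : ℕ := U - (m+1) with hE
    have hEU : U = m + 1 + E := by omega
    have hEs : s + 2*c' + 2 ≤ E := by omega
    -- t ≥ 2
    have ht2 : 2 ≤ t := by
      by_contra ht1
      push_neg at ht1
      have hall : ∀ i ∈ range (m+1), a i = 1 := by
        intro i hi
        have h1 := hapos i hi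
        have h2 : a i ≤ a m := ha_mono i m (by simp at hi; omega) (by omega)
        omega
      have : U = m + 1 := by
        rw [hU, Finset.sum_congr rfl hall]
        simp
      omega
    -- E ≥ t - 1
    have hEt : t ≤ E + 1 := by
      have h1 : ∑ i ∈ range m, a i + a m = U := by
        rw [hU, Finset.sum_range_succ]
      have h2 : m ≤ ∑ i ∈ range m, a i := by
        calc m = ∑ _i ∈ range m, 1 := by simp
          _ ≤ _ := Finset.sum_le_sum (fun i hi => ha_pos i (by simp at hi; omega))
      omega
    -- lower bound on P : t^E ≤ P^(t-1)
    have hsubsum : (∑ i ∈ range (m+1), (a i - 1)) = E := by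
      have h1 : ∑ i ∈ range (m+1), ((a i - 1) + 1) = U := by
        rw [hU]
        exact Finset.sum_congr rfl (fun i hi => by have := hapos i hi; omega)
      rw [Finset.sum_add_distrib, Finset.sum_const, Finset.card_range] at h1
      simp only [smul_eq_mul, mul_one] at h1
      omega
    have hPl : t^E ≤ P^(t-1) := by
      calc t^E = t^(∑ i ∈ range (m+1), (a i - 1)) := by rw [hsubsum]
        _ = ∏ i ∈ range (m+1), t^(a i - 1) := (Finset.prod_pow_eq_pow_sum _ _ _).symm
        _ ≤ ∏ i ∈ range (m+1), (a i)^(t-1) := by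
            apply Finset.prod_le_prod'
            intro i hi
            exact aux_B (a i) (hapos i hi) t (ha_mono i m (by simp at hi; omega) (by omega))
        _ = P^(t-1) := Finset.prod_pow _ _ _
    -- upper bound on P : P * t^w ≤ 2 * (t+1)^w
    set w : ℕ := s + c' with hw
    have htle : ∀ j ∈ range c', t ≤ a (m+1+j) := by
      intro j hj
      exact ha_mono m (m+1+j) (by omega) (by simp at hj; omega)
    have hQN : 0 < Q * N := by
      apply Nat.mul_pos
      · apply Finset.prod_pos
        intro j hj
        exact ha_pos _ (by simp at hj; omega)
      · exact ha_pos _ (by omega)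
    have c3 : (∏ j ∈ range c', d (1+j)) * t^(∑ j ∈ range c', e j)
        ≤ (∏ j ∈ range c', (a (m+1+j) + 1)) * (t+1)^(∑ j ∈ range c', e j) := by
      rw [← Finset.prod_pow_eq_pow_sum, ← Finset.prod_pow_eq_pow_sum,
        ← Finset.prod_mul_distrib, ← Finset.prod_mul_distrib]
      apply Finset.prod_le_prod'
      intro j hj
      rw [hd_eq j hj]
      exact aux_slack t (a (m+1+j) + 1) (by have := htle j hj; omega) (e j)
    have c4 : d (c'+1) * t^f ≤ (2*N) * (t+1)^f := by
      have e2 : d (c'+1) = 2*N + f := by simp only [hf]; omega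
      rw [e2]
      apply aux_slack
      have : t ≤ N := ha_mono m (m+c'+1) (by omega) (by omega)
      omega
    have c5 : (∏ j ∈ range c', (a (m+1+j) + 1)) * t^c' ≤ Q * (t+1)^c' := by
      have l1 : (∏ j ∈ range c', ((a (m+1+j) + 1) * t))
          = (∏ j ∈ range c', (a (m+1+j) + 1)) * t^c' := by
        rw [Finset.prod_mul_distrib, Finset.prod_const, Finset.card_range]
      have l2 : (∏ j ∈ range c', (a (m+1+j) * (t+1))) = Q * (t+1)^c' := by
        rw [Finset.prod_mul_distrib, Finset.prod_const, Finset.card_range]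
      rw [← l1, ← l2]
      apply Finset.prod_le_prod'
      intro j hj
      have := htle j hj
      nlinarith
    have hPu : P * t^w ≤ 2 * (t+1)^w := by
      have hchain : (P * t^w) * (Q * N) ≤ (2 * (t+1)^w) * (Q * N) := by
        have hprod' : P * Q * N ≤ (∏ j ∈ range c', d (1+j)) * d (c'+1) := by
          rw [← hD_prod, ← hA_prod]; exact hprod
        calc (P * t^w) * (Q * N)
            = (P * Q * N) * (t^(∑ j ∈ range c', e j) * t^f * t^c') := by
              rw [hw, hs, pow_add, pow_add]
              ring
          _ ≤ ((∏ j ∈ range c', d (1+j)) * d (c'+1)) * (t^(∑ j ∈ range c', e j) * t^f * t^c') :=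
              Nat.mul_le_mul_right _ hprod'
          _ = ((∏ j ∈ range c', d (1+j)) * t^(∑ j ∈ range c', e j)) * (d (c'+1) * t^f) * t^c' := by
              ring
          _ ≤ ((∏ j ∈ range c', (a (m+1+j) + 1)) * (t+1)^(∑ j ∈ range c', e j))
                * ((2*N) * (t+1)^f) * t^c' := by
              apply Nat.mul_le_mul_right
              exact Nat.mul_le_mul c3 c4
          _ = ((∏ j ∈ range c', (a (m+1+j) + 1)) * t^c')
                * ((t+1)^(∑ j ∈ range c', e j) * (t+1)^f * (2*N)) := by ring
          _ ≤ (Q * (t+1)^c') * ((t+1)^(∑ j ∈ range c', e j) * (t+1)^f * (2*N)) :=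
              Nat.mul_le_mul_right _ c5
          _ = (2 * (t+1)^w) * (Q * N) := by
              rw [hw, hs, pow_add, pow_add]
              ring
      exact Nat.le_of_mul_le_mul_right (by
        calc P * t^w * (Q*N) ≤ (2 * (t+1)^w) * (Q * N) := hchain
          _ = 2 * (t+1)^w * (Q*N) := rfl) hQN
    -- apply the core lemma
    obtain ⟨t', ht'⟩ : ∃ t', t = t' + 2 := ⟨t - 2, by omega⟩
    have hPl' : (t'+2)^E ≤ P^(t'+1) := by
      have h2 : t - 1 = t' + 1 := by omega
      rw [← ht', ← h2]
      exact hPl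
    have hPu' : P * (t'+2)^w ≤ 2 * (t'+3)^w := by
      have h3 : t + 1 = t' + 3 := by omega
      rw [← ht', ← h3]
      exact hPu
    exact core t' E w P (by omega) (by omega) hPl' hPu'
  constructor
  · intro i hi
    exact le_trans (ha_mono i n hi le_rfl) key
  · intro j hj1 hj2
    have h1 : d j ≤ ∑ j ∈ Finset.Icc 1 c, d j :=
      Finset.single_le_sum (fun i _ => Nat.zero_le _) (Finset.mem_Icc.mpr ⟨hj1, hj2⟩)
    have h2 : ∑ i ∈ Finset.range (n+1), a i ≤ n * (n+1) := by
      calc ∑ i ∈ Finset.range (n+1), a i ≤ ∑ _i ∈ Finset.range (n+1), n :=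
            Finset.sum_le_sum (fun i hi => le_trans
              (ha_mono i n (by simp at hi; omega) le_rfl) key)
        _ = n * (n+1) := by
            simp [Finset.sum_const, Finset.card_range, Nat.mul_comm]
    omega
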